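/- Deciding whether an instance of rate-goal Cookie Clicker (0 initial cookies, initial rate 1, k items with rate increases x_i, initial costs y_i, and cost multipliers α_i, all rational) admits a strategy reaching rate R within time T is NP-hard. -/

import Mathlib

/-- Run a Cookie Clicker strategy (a list of item purchases).  The state is
`(t, z, G, cnt)`: elapsed time, cookies on hand, generation rate, and how many
copies of each item have been bought.  Buying the next copy of item `i` costs
`Y i * A i ^ cnt i`; one waits (if necessary) until it is affordable, pays,
and the rate increases by `X i`. -/
noncomputable def run {k : ℕ} (X Y A : Fin k → ℝ) :
    List (Fin k) → ℝ × ℝ × ℝ × (Fin k → ℕ) → ℝ × ℝ × ℝ × (Fin k → ℕ)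
  | [], s => s
  | i :: l, (t, z, G, cnt) =>
    let c := Y i * A i ^ cnt i
    let w := max ((c - z) / G) 0
    run X Y A l (t + w, z + G * w - c, G + X i, Function.update cnt i (cnt i + 1))

/-- Rate-goal Cookie Clicker decision problem: starting with `0` cookies and
rate `1`, is there a strategy reaching rate at least `R` within time `T`? -/
noncomputable def ReachesRate {k : ℕ} (X Y A : Fin k → ℝ) (R T : ℝ) : Prop :=
  ∃ l : List (Fin k),
    (run X Y A l (0, 0, 1, fun _ => 0)).2.2.1 ≥ R ∧
    (run X Y A l (0, 0, 1, fun _ => 0)).1 ≤ T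

namespace CCaux

variable {k : ℕ}

/-- total cost of a purchase list, starting from counts `cnt`. -/
noncomputable def costs (a : Fin k → ℕ) (L : ℝ) : List (Fin k) → (Fin k → ℕ) → ℝ
  | [], _ => 0
  | i :: l, cnt => (a i : ℝ) * L ^ cnt i + costs a L l (Function.update cnt i (cnt i + 1))

lemma costs_nonneg (a : Fin k → ℕ) {L : ℝ} (hL : 0 ≤ L) :
    ∀ (l : List (Fin k)) (cnt : Fin k → ℕ), 0 ≤ costs a L l cnt
  | [], _ => le_refl _
  | i :: l, cnt => by
      have h1 := costs_nonneg a hL l (Function.update cnt i (cnt i + 1))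
      have h2 : (0:ℝ) ≤ (a i : ℝ) * L ^ cnt i :=
        mul_nonneg (Nat.cast_nonneg _) (pow_nonneg hL _)
      simpa [costs] using add_nonneg h2 h1

lemma costs_ge_of_mem (a : Fin k → ℕ) {L : ℝ} (hL : 1 ≤ L) (ha : ∀ i, 0 < a i) :
    ∀ (l : List (Fin k)) (cnt : Fin k → ℕ) (i : Fin k), i ∈ l →
      (1 ≤ cnt i ∨ 2 ≤ l.count i) → L ≤ costs a L l cnt
  | [], _, i, hi, _ => absurd hi List.not_mem_nil
  | j :: l, cnt, i, hi, hcase => by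
      have hL0 : (0:ℝ) ≤ L := le_trans zero_le_one hL
      by_cases hij : i = j
      · subst hij
        by_cases h1 : 1 ≤ cnt i
        · -- head purchase is expensive
          have hp : L ≤ L ^ cnt i := le_self_pow₀ hL (by omega)
          have hai : (1:ℝ) ≤ (a i : ℝ) := by exact_mod_cast ha i
          have : L ≤ (a i : ℝ) * L ^ cnt i := by nlinarith
          have := le_trans this (le_add_of_nonneg_right
            (costs_nonneg a hL0 l (Function.update cnt i (cnt i + 1))))
          simpa [costs] using this
        · -- cnt i = 0, so count in list ≥ 2, hence i ∈ l and updated cnt i = 1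
          have hc2 : 2 ≤ (i :: l).count i := by
            rcases hcase with h | h
            · omega
            · exact h
          have hmem : i ∈ l := by
            have : 1 ≤ l.count i := by
              have : (i :: l).count i = l.count i + 1 := List.count_cons_self
              simp [List.count_cons] at hc2
              omega
            exact List.count_pos_iff.mp this
          have hrec := costs_ge_of_mem a hL ha l (Function.update cnt i (cnt i + 1)) i hmem
            (Or.inl (by simp [Function.update_self]))
          have h2 : (0:ℝ) ≤ (a i : ℝ) * L ^ cnt i :=
            mul_nonneg (Nat.cast_nonneg _) (pow_nonneg hL0 _)
          have := le_trans hrec (le_add_of_nonneg_left h2)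
          simpa [costs] using this
      · have hmem : i ∈ l := by
          rcases List.mem_cons.mp hi with h | h
          · exact absurd h hij
          · exact h
        have hrec := costs_ge_of_mem a hL ha l (Function.update cnt j (cnt j + 1)) i hmem
          (by
            rcases hcase with h | h
            · exact Or.inl (by simpa [Function.update_of_ne hij] using h)
            · exact Or.inr (by
                have : (j :: l).count i = l.count i := List.count_cons_of_ne (Ne.symm hij)
                omega))
        have h2 : (0:ℝ) ≤ (a j : ℝ) * L ^ cnt j :=
          mul_nonneg (Nat.cast_nonneg _) (pow_nonneg hL0 _)
        have := le_trans hrec (le_add_of_nonneg_left h2)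
        simpa [costs] using this

lemma costs_ge_length (a : Fin k → ℕ) {L : ℝ} (hL : 1 ≤ L) (ha : ∀ i, 0 < a i) :
    ∀ (l : List (Fin k)) (cnt : Fin k → ℕ),
      L * ((l.length : ℝ) -
        ((Finset.univ.filter fun i => cnt i = 0).card : ℝ)) ≤ costs a L l cnt
  | [], cnt => by
      have : (0:ℝ) ≤ ((Finset.univ.filter fun i => cnt i = 0).card : ℝ) := Nat.cast_nonneg _
      have hL0 : (0:ℝ) ≤ L := le_trans zero_le_one hL
      simp only [costs, List.length_nil, Nat.cast_zero]
      nlinarith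
  | j :: l, cnt => by
      have hL0 : (0:ℝ) ≤ L := le_trans zero_le_one hL
      have hrec := costs_ge_length a hL ha l (Function.update cnt j (cnt j + 1))
      by_cases h0 : cnt j = 0
      · -- filter set loses j
        have hset : (Finset.univ.filter fun i => Function.update cnt j (cnt j + 1) i = 0)
            = (Finset.univ.filter fun i => cnt i = 0).erase j := by
          ext i
          by_cases hij : i = j <;>
            simp [hij, Function.update_self, Function.update_of_ne, *]
        have hjmem : j ∈ Finset.univ.filter fun i => cnt i = 0 := by simp [h0]
        have hcard : ((Finset.univ.filter fun i => Function.update cnt j (cnt j + 1) i = 0).card : ℝ)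
            = ((Finset.univ.filter fun i => cnt i = 0).card : ℝ) - 1 := by
          rw [hset, Finset.card_erase_of_mem hjmem]
          have : 1 ≤ (Finset.univ.filter fun i => cnt i = 0).card :=
            Finset.card_pos.mpr ⟨j, hjmem⟩
          push_cast [Nat.cast_sub this]
          ring
        rw [hcard] at hrec
        have h2 : (0:ℝ) ≤ (a j : ℝ) * L ^ cnt j :=
          mul_nonneg (Nat.cast_nonneg _) (pow_nonneg hL0 _)
        simp only [costs, List.length_cons]
        push_cast
        nlinarith
      · -- filter set unchanged, head cost ≥ L
        have hset : (Finset.univ.filter fun i => Function.update cnt j (cnt j + 1) i = 0)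
            = (Finset.univ.filter fun i => cnt i = 0) := by
          ext i
          by_cases hij : i = j <;>
            simp [hij, Function.update_self, Function.update_of_ne, *]
        rw [hset] at hrec
        have hp : L ≤ L ^ cnt j := le_self_pow₀ hL h0
        have hai : (1:ℝ) ≤ (a j : ℝ) := by exact_mod_cast ha j
        have h2 : L ≤ (a j : ℝ) * L ^ cnt j := by nlinarith
        simp only [costs, List.length_cons]
        push_cast
        nlinarith

lemma costs_eq_sum (a : Fin k → ℕ) (L : ℝ) :
    ∀ (l : List (Fin k)) (cnt : Fin k → ℕ), l.Nodup → (∀ i ∈ l, cnt i = 0) →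
      costs a L l cnt = (l.map fun i => (a i : ℝ)).sum
  | [], cnt, _, _ => by simp [costs]
  | j :: l, cnt, hnd, hcnt => by
      have hj : cnt j = 0 := hcnt j List.mem_cons_self
      have hrec := costs_eq_sum a L l (Function.update cnt j (cnt j + 1))
        (List.Nodup.of_cons hnd)
        (by
          intro i hi
          have hij : i ≠ j := by
            rintro rfl
            exact (List.nodup_cons.mp hnd).1 hi
          rw [Function.update_of_ne hij]
          exact hcnt i (List.mem_cons_of_mem j hi))
      simp only [hj, zero_add] at hrec
      simp [costs, hj, hrec]

end CCaux

namespace CCaux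

variable {k : ℕ}

lemma master (a : Fin k → ℕ) (W L : ℝ) (hW : 0 < W) (hL : 0 ≤ L) :
    ∀ (l : List (Fin k)) (t z G : ℝ) (cnt : Fin k → ℕ), 0 ≤ z → 1 ≤ G →
      0 ≤ (run (fun i => (a i : ℝ) / W) (fun i => (a i : ℝ)) (fun _ => L) l (t, z, G, cnt)).2.1 ∧
      G ≤ (run (fun i => (a i : ℝ) / W) (fun i => (a i : ℝ)) (fun _ => L) l (t, z, G, cnt)).2.2.1 ∧
      t ≤ (run (fun i => (a i : ℝ) / W) (fun i => (a i : ℝ)) (fun _ => L) l (t, z, G, cnt)).1 ∧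
      (run (fun i => (a i : ℝ) / W) (fun i => (a i : ℝ)) (fun _ => L) l (t, z, G, cnt)).2.2.1
        = G + (l.map fun i => (a i : ℝ) / W).sum ∧
      costs a L l cnt + (run (fun i => (a i : ℝ) / W) (fun i => (a i : ℝ)) (fun _ => L) l (t, z, G, cnt)).2.1
        ≤ z + (run (fun i => (a i : ℝ) / W) (fun i => (a i : ℝ)) (fun _ => L) l (t, z, G, cnt)).2.2.1
            * ((run (fun i => (a i : ℝ) / W) (fun i => (a i : ℝ)) (fun _ => L) l (t, z, G, cnt)).1 - t)
  | [], t, z, G, cnt, hz, hG => by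
      refine ⟨hz, le_refl _, le_refl _, by simp [run], ?_⟩
      simp [run, costs]
  | j :: l, t, z, G, cnt, hz, hG => by
      have hG0 : (0:ℝ) < G := lt_of_lt_of_le one_pos hG
      set c : ℝ := (a j : ℝ) * L ^ cnt j with hc
      set w : ℝ := max ((c - z) / G) 0 with hwdef
      have hw : 0 ≤ w := le_max_right _ _
      have hz1 : 0 ≤ z + G * w - c := by
        have h1 : (c - z) / G ≤ w := le_max_left _ _
        have h2 : G * ((c - z) / G) ≤ G * w := mul_le_mul_of_nonneg_left h1 hG0.le
        rw [mul_div_cancel₀ _ hG0.ne'] at h2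
        linarith
      have hXj : 0 ≤ (a j : ℝ) / W := div_nonneg (Nat.cast_nonneg _) hW.le
      have hG1 : 1 ≤ G + (a j : ℝ) / W := by linarith
      have hstep : run (fun i => (a i : ℝ) / W) (fun i => (a i : ℝ)) (fun _ => L) (j :: l) (t, z, G, cnt)
          = run (fun i => (a i : ℝ) / W) (fun i => (a i : ℝ)) (fun _ => L) l
              (t + w, z + G * w - c, G + (a j : ℝ) / W, Function.update cnt j (cnt j + 1)) := rfl
      obtain ⟨ih1, ih2, ih3, ih4, ih5⟩ := master a W L hW hL l (t + w) (z + G * w - c)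
        (G + (a j : ℝ) / W) (Function.update cnt j (cnt j + 1)) hz1 hG1
      rw [hstep]
      refine ⟨ih1, by linarith, by linarith, ?_, ?_⟩
      · rw [ih4, List.map_cons, List.sum_cons]; ring
      · have hGG' : G + (a j : ℝ) / W ≤ _ := ih2
        have hkey : (0:ℝ) ≤ ((run (fun i => (a i : ℝ) / W) (fun i => (a i : ℝ)) (fun _ => L) l
              (t + w, z + G * w - c, G + (a j : ℝ) / W, Function.update cnt j (cnt j + 1))).2.2.1 - G) * w :=
          mul_nonneg (by linarith) hw
        have hco : costs a L (j :: l) cnt = c + costs a L l (Function.update cnt j (cnt j + 1)) := rfl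
        rw [hco]
        nlinarith

lemma forward (a : Fin k → ℕ) (W L : ℝ) (hW : 0 < W) :
    ∀ (l : List (Fin k)) (t G : ℝ) (cnt : Fin k → ℕ), l.Nodup → 1 ≤ G →
      (∀ i ∈ l, cnt i = 0) →
      (run (fun i => (a i : ℝ) / W) (fun i => (a i : ℝ)) (fun _ => L) l (t, 0, G, cnt)).2.1 = 0 ∧
      (run (fun i => (a i : ℝ) / W) (fun i => (a i : ℝ)) (fun _ => L) l (t, 0, G, cnt)).2.2.1
        = G + (l.map fun i => (a i : ℝ) / W).sum ∧
      (run (fun i => (a i : ℝ) / W) (fun i => (a i : ℝ)) (fun _ => L) l (t, 0, G, cnt)).1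
        ≤ t + (l.map fun i => (a i : ℝ)).sum
  | [], t, G, cnt, _, hG, _ => by
      refine ⟨rfl, by simp [run], by simp [run]⟩
  | j :: l, t, G, cnt, hnd, hG, hcnt => by
      have hG0 : (0:ℝ) < G := lt_of_lt_of_le one_pos hG
      have h0 : cnt j = 0 := hcnt j List.mem_cons_self
      have e1 : max (((a j : ℝ) * L ^ cnt j - 0) / G) 0 = (a j : ℝ) / G := by
        rw [h0, pow_zero, mul_one, sub_zero]
        exact max_eq_left (div_nonneg (Nat.cast_nonneg _) hG0.le)
      have e2 : 0 + G * ((a j : ℝ) / G) - (a j : ℝ) * L ^ cnt j = 0 := by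
        rw [h0, pow_zero, mul_one]
        field_simp
        ring
      have hstep : run (fun i => (a i : ℝ) / W) (fun i => (a i : ℝ)) (fun _ => L) (j :: l) (t, 0, G, cnt)
          = run (fun i => (a i : ℝ) / W) (fun i => (a i : ℝ)) (fun _ => L) l
              (t + (a j : ℝ) / G, 0, G + (a j : ℝ) / W, Function.update cnt j (cnt j + 1)) := by
        rw [show run (fun i => (a i : ℝ) / W) (fun i => (a i : ℝ)) (fun _ => L) (j :: l) (t, 0, G, cnt)
            = run (fun i => (a i : ℝ) / W) (fun i => (a i : ℝ)) (fun _ => L) l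
              (t + max (((a j : ℝ) * L ^ cnt j - 0) / G) 0,
               0 + G * max (((a j : ℝ) * L ^ cnt j - 0) / G) 0 - (a j : ℝ) * L ^ cnt j,
               G + (a j : ℝ) / W, Function.update cnt j (cnt j + 1)) from rfl, e1, e2]
      have hXj : 0 ≤ (a j : ℝ) / W := div_nonneg (Nat.cast_nonneg _) hW.le
      obtain ⟨ih1, ih2, ih3⟩ := forward a W L hW l (t + (a j : ℝ) / G) (G + (a j : ℝ) / W)
        (Function.update cnt j (cnt j + 1)) (List.Nodup.of_cons hnd) (by linarith)
        (by
          intro i hi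
          have hij : i ≠ j := by
            rintro rfl
            exact (List.nodup_cons.mp hnd).1 hi
          rw [Function.update_of_ne hij]
          exact hcnt i (List.mem_cons_of_mem j hi))
      rw [hstep]
      refine ⟨ih1, ?_, ?_⟩
      · rw [ih2, List.map_cons, List.sum_cons]; ring
      · have hdl : (a j : ℝ) / G ≤ (a j : ℝ) := div_le_self (Nat.cast_nonneg _) hG
        calc _ ≤ t + (a j : ℝ) / G + (l.map fun i => (a i : ℝ)).sum := ih3
          _ ≤ t + ((j :: l).map fun i => (a i : ℝ)).sum := by
              rw [List.map_cons, List.sum_cons]; linarith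

end CCaux


set_option maxHeartbeats 1000000 in
/-- NP-hardness of the rate-goal version of Cookie Clicker, expressed as the
correctness of the many-one reduction from the NP-hard problem PARTITION:
given positive integers `a₁, …, a_k` summing to `2B`, with `W = B² + B + 1`,
items `(a_i / W, a_i, L)` for a sufficiently large cost multiplier `L`,
rate goal `R = 1 + B / W` and time bound `T = B`, a partition exists iff the
constructed Cookie Clicker instance is a yes-instance. -/
theorem stmt_13 (k B : ℕ) (hk : 0 < k) (hB : 0 < B)
    (a : Fin k → ℕ) (ha : ∀ i, 0 < a i) (hsum : ∑ i, a i = 2 * B) :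
    ∃ L₀ : ℝ, ∀ L : ℝ, L ≥ L₀ →
      ((∃ S : Finset (Fin k), ∑ i ∈ S, a i = B) ↔
        ReachesRate (fun i => (a i : ℝ) / ((B : ℝ) ^ 2 + B + 1))
          (fun i => (a i : ℝ)) (fun _ => L)
          (1 + (B : ℝ) / ((B : ℝ) ^ 2 + B + 1)) (B : ℝ)) := by
  have hB1 : (1:ℝ) ≤ (B:ℝ) := by exact_mod_cast hB
  have hk1 : (1:ℝ) ≤ (k:ℝ) := by exact_mod_cast hk
  set W : ℝ := (B:ℝ) ^ 2 + (B:ℝ) + 1 with hWdef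
  have hW1 : 1 ≤ W := by nlinarith
  have hW0 : 0 < W := lt_of_lt_of_le one_pos hW1
  refine ⟨4 * (B:ℝ)^2 * ((k:ℝ) + 1) + 2 * B + 1, ?_⟩
  intro L hL
  have hL1 : (1:ℝ) ≤ L := by nlinarith
  have hL0 : (0:ℝ) ≤ L := le_trans zero_le_one hL1
  have ha2B : ∀ i, a i ≤ 2 * B := by
    intro i
    rw [← hsum]
    exact Finset.single_le_sum (fun j _ => Nat.zero_le _) (Finset.mem_univ i)
  unfold ReachesRate
  constructor
  · rintro ⟨S, hS⟩
    obtain ⟨h1, h2, h3⟩ := CCaux.forward a W L hW0 S.toList 0 1 (fun _ => 0)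
      S.nodup_toList le_rfl (fun _ _ => rfl)
    have hsumS : (S.toList.map fun i => (a i : ℝ)).sum = (B : ℝ) := by
      rw [Finset.sum_map_toList]
      exact_mod_cast hS
    have hdiv : (S.toList.map fun i => (a i : ℝ) / W).sum = (B : ℝ) / W := by
      simp only [div_eq_mul_inv, List.sum_map_mul_right, hsumS]
    refine ⟨S.toList, ?_, ?_⟩
    · rw [ge_iff_le, h2, hdiv]
    · calc _ ≤ 0 + (S.toList.map fun i => (a i : ℝ)).sum := h3
        _ ≤ (B:ℝ) := by rw [hsumS]; norm_num
  · rintro ⟨l, hR, hT⟩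
    obtain ⟨h1, h2, h3, h4, h5⟩ := CCaux.master a W L hW0 hL0 l 0 0 1 (fun _ => 0) le_rfl le_rfl
    set s : ℝ := (l.map fun i => (a i : ℝ)).sum with hsdef
    have hdiv : (l.map fun i => (a i : ℝ) / W).sum = s / W := by
      rw [hsdef]
      simp only [div_eq_mul_inv, List.sum_map_mul_right]
    rw [h4, hdiv] at hR
    have hsB : (B:ℝ) ≤ s := by
      have h := (div_le_div_iff_of_pos_right hW0).mp (by linarith : (B:ℝ)/W ≤ s/W)
      exact h
    have hs0 : (0:ℝ) ≤ s := by linarith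
    have hsW0 : (0:ℝ) ≤ s / W := div_nonneg hs0 hW0.le
    have hcost : CCaux.costs a L l (fun _ => 0) ≤ (1 + s / W) * (B:ℝ) := by
      rw [h4, hdiv] at h5
      have h6 : CCaux.costs a L l (fun _ => 0)
          ≤ (1 + s / W) * (run (fun i => (a i : ℝ) / W) (fun i => (a i : ℝ)) (fun _ => L) l (0, 0, 1, fun _ => 0)).1 := by
        nlinarith [h1, h5]
      calc CCaux.costs a L l (fun _ => 0) ≤ _ := h6
        _ ≤ (1 + s / W) * (B:ℝ) := mul_le_mul_of_nonneg_left hT (by linarith)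
    have hslen : s ≤ 2 * (B:ℝ) * l.length := by
      have h7 := List.sum_le_card_nsmul (l.map fun i => (a i : ℝ)) (2 * (B:ℝ))
        (by
          intro x hx
          obtain ⟨j, _, rfl⟩ := List.mem_map.mp hx
          exact_mod_cast (by exact_mod_cast ha2B j : (a j : ℝ) ≤ ((2 * B : ℕ) : ℝ)))
      rw [hsdef]
      simp only [nsmul_eq_mul, List.length_map] at h7
      linarith [h7]
    clear h1 h2 h3 h4 h5 hR hT hdiv
    by_cases hdup : ∃ i, 2 ≤ l.count i
    · exfalso
      obtain ⟨i, hi⟩ := hdup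
      have hmem : i ∈ l := List.count_pos_iff.mp (by omega)
      have hc1 : L ≤ CCaux.costs a L l (fun _ => 0) :=
        CCaux.costs_ge_of_mem a hL1 ha l (fun _ => 0) i hmem (Or.inr hi)
      have hfil : ((Finset.univ.filter fun j : Fin k => (fun _ : Fin k => 0) j = 0).card : ℝ) = (k:ℝ) := by
        simp
      have hc2 : L * ((l.length : ℝ) - (k:ℝ)) ≤ CCaux.costs a L l (fun _ => 0) := by
        have h8 := CCaux.costs_ge_length a hL1 ha l (fun _ => 0)
        rwa [hfil] at h8
      have hcup : CCaux.costs a L l (fun _ => 0) ≤ (B:ℝ) + 2 * (B:ℝ)^2 * l.length := by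
        have hsW : s / W ≤ s := by
          rw [div_le_iff₀ hW0]
          nlinarith
        have h9 : (1 + s) * (B:ℝ) ≤ (B:ℝ) + 2 * (B:ℝ)^2 * l.length := by nlinarith [hslen]
        nlinarith [hcost, hsW, hB1]
      set n : ℝ := (l.length : ℝ) with hndef
      by_cases hcase : l.length ≤ 2 * k
      · have hnk : n ≤ 2 * (k:ℝ) := by rw [hndef]; exact_mod_cast hcase
        have h8 : 2*(B:ℝ)^2*n ≤ 2*(B:ℝ)^2*(2*(k:ℝ)) :=
          mul_le_mul_of_nonneg_left hnk (by positivity)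
        linarith [hc1, hcup, hL, h8, sq_nonneg (B:ℝ)]
      · push_neg at hcase
        have hnk : 2 * (k:ℝ) < n := by rw [hndef]; exact_mod_cast hcase
        have hm : (k:ℝ) < n - k := by linarith
        have hm1 : (1:ℝ) ≤ n - k := by linarith
        have hkey : (4 * (B:ℝ)^2 * ((k:ℝ) + 1) + 2 * B + 1) * (n - k) ≤ L * (n - k) :=
          mul_le_mul_of_nonneg_right hL (by linarith)
        have e5 : (4 * (B:ℝ)^2 * ((k:ℝ) + 1) + 2 * B + 1) * (n - k) ≤ (B:ℝ) + 2 * (B:ℝ)^2 * n :=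
          le_trans hkey (le_trans hc2 hcup)
        have e10 : 2*(B:ℝ)^2*(k:ℝ) ≤ 2*(B:ℝ)^2*(n - k) :=
          mul_le_mul_of_nonneg_left hm.le (by positivity)
        have e11 : 2*(B:ℝ)*1 ≤ 2*(B:ℝ)*(n - k) :=
          mul_le_mul_of_nonneg_left hm1 (by positivity)
        have e13 : (0:ℝ) ≤ 4*(B:ℝ)^2*(k:ℝ)*(n - k) :=
          mul_nonneg (by positivity) (by linarith)
        linarith [e5, e10, e11, e13, hm1, hB1]
    · push_neg at hdup
      have hnd : l.Nodup := List.nodup_iff_count_le_one.mpr (fun i => by have := hdup i; omega)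
      have hco : CCaux.costs a L l (fun _ => 0) = s :=
        CCaux.costs_eq_sum a L l (fun _ => 0) hnd (fun _ _ => rfl)
      have hsf : s = ((∑ i ∈ l.toFinset, a i : ℕ) : ℝ) := by
        rw [hsdef, ← List.sum_toFinset _ hnd]
        exact (Nat.cast_sum _ _).symm
      set m : ℕ := ∑ i ∈ l.toFinset, a i with hmdef
      have hmB : (B:ℝ) ≤ (m:ℝ) := by rw [← hsf]; exact hsB
      have h7 : (m:ℝ) * W ≤ (W + (m:ℝ)) * (B:ℝ) := by
        have h8 : (m:ℝ) ≤ (1 + (m:ℝ) / W) * (B:ℝ) := by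
          rw [← hsf]
          calc s = CCaux.costs a L l (fun _ => 0) := hco.symm
            _ ≤ (1 + s / W) * (B:ℝ) := hcost
        have h9 := mul_le_mul_of_nonneg_right h8 hW0.le
        calc (m:ℝ) * W ≤ (1 + (m:ℝ) / W) * (B:ℝ) * W := h9
          _ = (W + (m:ℝ)) * (B:ℝ) := by field_simp
      have hub : (m:ℝ) * ((B:ℝ)^2 + 1) ≤ (B:ℝ) * W := by nlinarith [h7]
      have hmlt : (m:ℝ) < (B:ℝ) + 1 := by
        by_contra hcon
        push_neg at hcon
        have h10 : ((B:ℝ)+1)*((B:ℝ)^2+1) ≤ (m:ℝ)*((B:ℝ)^2+1) :=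
          mul_le_mul_of_nonneg_right hcon (by positivity)
        rw [hWdef] at hub
        nlinarith [h10, hub]
      have hmle : m ≤ B := by
        have : m < B + 1 := by exact_mod_cast hmlt
        omega
      have hmge : B ≤ m := by exact_mod_cast hmB
      refine ⟨l.toFinset, ?_⟩
      rw [← hmdef]
      omega
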